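/- Let S be a type, f : S ≃ S a bijection, K ⊆ S a set with f(K) = K, and B₀, B₁, B₂, B₃, B₄ ⊆ S sets with K ⊆ B₀ ∪ B₁ ∪ B₂ ∪ B₃ ∪ B₄. Assume that for every z ∈ K: (i) z ∉ B_i ∩ B_j for (i,j) ∈ {(0,1), (0,3), (0,4), (1,2), (1,4), (2,3)}; (ii) if z ∈ B₀ ∪ B₁ then f(z) ∉ B₁ ∪ B₃; (iii) if z ∈ B₂ ∪ B₃ then f(z) ∉ B₀ ∪ B₁; (iv) if z ∈ B₄ then f(z) ∉ B₀ ∪ B₂; (v) if z ∈ B₀ \ B₂ then f(z) ∉ B₄; (vi) if z ∈ B₁ \ B₃ then f(z) ∉ B₄; (vii) if z ∈ B₂ \ (B₀ ∪ B₄) then f(z) ∉ B₂ ∪ B₃; (viii) if z ∈ B₃ \ (B₁ ∪ B₄) then f(z) ∉ B₂ ∪ B₃; (ix) if z ∈ B₄ \ (B₂ ∪ B₃) then f(z) ∉ B₄. Then for every z ∈ K there exists a bi-infinite sequence (i_n)_{n ∈ ℤ} with values in {0,1,2,3,4} such that (i_n, i_{n+1}) ∈ 𝔗⁻ for all n ∈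 ℤ and fⁿ(z) ∈ B_{i_n} for all n ∈ ℤ (where fⁿ denotes the n-th iterate for n ≥ 0 and the |n|-th iterate of the inverse for n < 0). -/

import Mathlib

/-- Admissible transitions `𝔗⁻` for the 5-box system. -/
def TminusFin : Set (Fin 5 × Fin 5) :=
  {(0, 0), (0, 2), (1, 0), (1, 2), (2, 4), (3, 4), (4, 1), (4, 3)}

/-- An ultrafilter limit of a sequence with values in a finite type. -/
lemma ultrafilter_fin5_const (U : Ultrafilter ℕ) (h : ℕ → Fin 5) :
    ∃ v, ∀ᶠ k in (U : Filter ℕ), h k = v := by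
  by_contra hcon
  push_neg at hcon
  have hne : ∀ v : Fin 5, ∀ᶠ k in (U : Filter ℕ), h k ≠ v :=
    fun v => hcon v
  obtain ⟨k, e0, e1, e2, e3, e4⟩ :=
    ((hne 0).and ((hne 1).and ((hne 2).and ((hne 3).and (hne 4))))).exists
  revert e0 e1 e2 e3 e4
  generalize h k = x
  intro e0 e1 e2 e3 e4
  fin_cases x <;> simp_all

/-- Under the hypotheses of Numerical Check B′, every point of the invariant set `K`
admits a bi-infinite itinerary through the boxes that is admissible with respect to
`𝔗⁻` (Proposition 3.4 of the paper, abstract form). -/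
theorem biinfinite_itinerary_minus {S : Type*} (f : Equiv.Perm S) (K : Set S)
    (B : Fin 5 → Set S)
    (hK : (⇑f) '' K = K)
    (hcov : K ⊆ B 0 ∪ B 1 ∪ B 2 ∪ B 3 ∪ B 4)
    (hi : ∀ z ∈ K, z ∉ B 0 ∩ B 1 ∧ z ∉ B 0 ∩ B 3 ∧ z ∉ B 0 ∩ B 4 ∧
      z ∉ B 1 ∩ B 2 ∧ z ∉ B 1 ∩ B 4 ∧ z ∉ B 2 ∩ B 3)
    (hii : ∀ z ∈ K, z ∈ B 0 ∪ B 1 → f z ∉ B 1 ∪ B 3)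
    (hiii : ∀ z ∈ K, z ∈ B 2 ∪ B 3 → f z ∉ B 0 ∪ B 1)
    (hiv : ∀ z ∈ K, z ∈ B 4 → f z ∉ B 0 ∪ B 2)
    (hv : ∀ z ∈ K, z ∈ B 0 \ B 2 → f z ∉ B 4)
    (hvi : ∀ z ∈ K, z ∈ B 1 \ B 3 → f z ∉ B 4)
    (hvii : ∀ z ∈ K, z ∈ B 2 \ (B 0 ∪ B 4) → f z ∉ B 2 ∪ B 3)
    (hviii : ∀ z ∈ K, z ∈ B 3 \ (B 1 ∪ B 4) → f z ∉ B 2 ∪ B 3)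
    (hix : ∀ z ∈ K, z ∈ B 4 \ (B 2 ∪ B 3) → f z ∉ B 4) :
    ∀ z ∈ K, ∃ i : ℤ → Fin 5,
      (∀ n : ℤ, (i n, i (n + 1)) ∈ TminusFin) ∧
      (∀ n : ℤ, (f ^ n) z ∈ B (i n)) := by
  intro z hz
  classical
  -- the orbit
  set g : ℤ → S := fun n => (f ^ n) z with hgdef
  have hgspec : ∀ n : ℤ, g n = (f ^ n) z := fun n => rfl
  have hpow : ∀ n : ℤ, f ^ (n + 1) = f * f ^ n := by
    intro n; rw [add_comm n 1, zpow_add, zpow_one]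
  have hg1 : ∀ n : ℤ, g (n + 1) = f (g n) := by
    intro n
    simp only [hgdef]
    rw [hpow, Equiv.Perm.mul_apply]
  -- the orbit stays in K
  have hgK : ∀ n : ℤ, g n ∈ K := by
    intro n
    induction n using Int.induction_on with
    | zero => simpa [hgdef] using hz
    | succ n ih =>
        rw [hg1, ← hK]
        exact ⟨g n, ih, rfl⟩
    | pred n ih =>
        have e : g (-(n : ℤ)) = f (g (-(n : ℤ) - 1)) := by
          have := hg1 (-(n : ℤ) - 1)
          rw [sub_add_cancel] at this
          exact this
        rw [← hK] at ih
        obtain ⟨y, hy, hyy⟩ := ih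
        have : y = g (-(n : ℤ) - 1) := f.injective (by rw [hyy, ← e])
        rwa [← this]
  -- entries of the transition set
  have T00 : ((0 : Fin 5), (0 : Fin 5)) ∈ TminusFin := by simp [TminusFin]
  have T02 : ((0 : Fin 5), (2 : Fin 5)) ∈ TminusFin := by simp [TminusFin]
  have T10 : ((1 : Fin 5), (0 : Fin 5)) ∈ TminusFin := by simp [TminusFin]
  have T12 : ((1 : Fin 5), (2 : Fin 5)) ∈ TminusFin := by simp [TminusFin]
  have T24 : ((2 : Fin 5), (4 : Fin 5)) ∈ TminusFin := by simp [TminusFin]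
  have T34 : ((3 : Fin 5), (4 : Fin 5)) ∈ TminusFin := by simp [TminusFin]
  have T41 : ((4 : Fin 5), (1 : Fin 5)) ∈ TminusFin := by simp [TminusFin]
  have T43 : ((4 : Fin 5), (3 : Fin 5)) ∈ TminusFin := by simp [TminusFin]
  -- the key backward-extension lemma
  have hstep : ∀ w ∈ K, ∀ v : Fin 5, f w ∈ B v →
      ∃ u : Fin 5, w ∈ B u ∧ (u, v) ∈ TminusFin := by
    intro w hw v hfv
    have hc := hcov hw
    fin_cases v
    · -- v = 0
      rcases hc with ((((h0 | h1) | h2) | h3) | h4)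
      · exact ⟨0, h0, T00⟩
      · exact ⟨1, h1, T10⟩
      · exact absurd (Or.inl hfv) (hiii w hw (Or.inl h2))
      · exact absurd (Or.inl hfv) (hiii w hw (Or.inr h3))
      · exact absurd (Or.inl hfv) (hiv w hw h4)
    · -- v = 1
      rcases hc with ((((h0 | h1) | h2) | h3) | h4)
      · exact absurd (Or.inl hfv) (hii w hw (Or.inl h0))
      · exact absurd (Or.inl hfv) (hii w hw (Or.inr h1))
      · exact absurd (Or.inr hfv) (hiii w hw (Or.inl h2))
      · exact absurd (Or.inr hfv) (hiii w hw (Or.inr h3))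
      · exact ⟨4, h4, T41⟩
    · -- v = 2
      rcases hc with ((((h0 | h1) | h2) | h3) | h4)
      · exact ⟨0, h0, T02⟩
      · exact ⟨1, h1, T12⟩
      · by_cases hb0 : w ∈ B 0
        · exact ⟨0, hb0, T02⟩
        · have hb4 : w ∉ B 4 := fun hb4 => (hiv w hw hb4) (Or.inr hfv)
          exact absurd (Or.inl hfv) (hvii w hw ⟨h2, fun h => h.elim hb0 hb4⟩)
      · by_cases hb1 : w ∈ B 1
        · exact ⟨1, hb1, T12⟩
        · have hb4 : w ∉ B 4 := fun hb4 => (hiv w hw hb4) (Or.inr hfv)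
          exact absurd (Or.inl hfv) (hviii w hw ⟨h3, fun h => h.elim hb1 hb4⟩)
      · exact absurd (Or.inr hfv) (hiv w hw h4)
    · -- v = 3
      rcases hc with ((((h0 | h1) | h2) | h3) | h4)
      · exact absurd (Or.inr hfv) (hii w hw (Or.inl h0))
      · exact absurd (Or.inr hfv) (hii w hw (Or.inr h1))
      · by_cases hb4 : w ∈ B 4
        · exact ⟨4, hb4, T43⟩
        · have hb0 : w ∉ B 0 := fun hb0 => (hii w hw (Or.inl hb0)) (Or.inr hfv)
          exact absurd (Or.inr hfv) (hvii w hw ⟨h2, fun h => h.elim hb0 hb4⟩)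
      · by_cases hb4 : w ∈ B 4
        · exact ⟨4, hb4, T43⟩
        · have hb1 : w ∉ B 1 := fun hb1 => (hii w hw (Or.inr hb1)) (Or.inr hfv)
          exact absurd (Or.inr hfv) (hviii w hw ⟨h3, fun h => h.elim hb1 hb4⟩)
      · exact ⟨4, h4, T43⟩
    · -- v = 4
      rcases hc with ((((h0 | h1) | h2) | h3) | h4)
      · by_cases hb2 : w ∈ B 2
        · exact ⟨2, hb2, T24⟩
        · exact absurd hfv (hv w hw ⟨h0, hb2⟩)
      · by_cases hb3 : w ∈ B 3
        · exact ⟨3, hb3, T34⟩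
        · exact absurd hfv (hvi w hw ⟨h1, hb3⟩)
      · exact ⟨2, h2, T24⟩
      · exact ⟨3, h3, T34⟩
      · by_cases hb2 : w ∈ B 2
        · exact ⟨2, hb2, T24⟩
        · by_cases hb3 : w ∈ B 3
          · exact ⟨3, hb3, T34⟩
          · exact absurd hfv (hix w hw ⟨h4, fun h => h.elim hb2 hb3⟩)
  -- finite backward chains
  have key : ∀ (N : ℤ) (d : ℕ), ∃ j : ℤ → Fin 5,
      (∀ n : ℤ, N - d ≤ n → n ≤ N → g n ∈ B (j n)) ∧
      (∀ n : ℤ, N - d ≤ n → n + 1 ≤ N → (j n, j (n + 1)) ∈ TminusFin) := by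
    intro N d
    induction d with
    | zero =>
        obtain ⟨v, hvv⟩ : ∃ v : Fin 5, g N ∈ B v := by
          rcases hcov (hgK N) with ((((h | h) | h) | h) | h)
          exacts [⟨0, h⟩, ⟨1, h⟩, ⟨2, h⟩, ⟨3, h⟩, ⟨4, h⟩]
        refine ⟨fun _ => v, fun n h1 h2 => ?_, fun n h1 h2 => absurd h2 (by omega)⟩
        have hn : n = N := by omega
        rwa [hn]
    | succ d ih =>
        obtain ⟨j, hmem, htr⟩ := ih
        have hm : g (N - d) ∈ B (j (N - d)) := hmem _ (by omega) (by omega)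
        have hm' : f (g (N - (d : ℤ) - 1)) ∈ B (j (N - d)) := by
          have := hg1 (N - (d : ℤ) - 1)
          rw [sub_add_cancel] at this
          rw [← this]; exact hm
        obtain ⟨u, hu, hut⟩ := hstep (g (N - (d : ℤ) - 1)) (hgK _) (j (N - d)) hm'
        refine ⟨fun n => if n = N - (d : ℤ) - 1 then u else j n, ?_, ?_⟩
        · intro n h1 h2
          show g n ∈ B (if n = N - (d : ℤ) - 1 then u else j n)
          split_ifs with hn
          · rw [hn]; exact hu
          · exact hmem n (by omega) h2
        · intro n h1 h2
          show (if n = N - (d : ℤ) - 1 then u else j n,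
                if n + 1 = N - (d : ℤ) - 1 then u else j (n + 1)) ∈ TminusFin
          split_ifs with ha hb hb
          · omega
          · have e : n + 1 = N - (d : ℤ) := by omega
            rw [e]; exact hut
          · omega
          · exact htr n (by omega) h2
  -- chains covering [-k, k]
  have hch : ∀ k : ℕ, ∃ J : ℤ → Fin 5,
      (∀ n : ℤ, -(k : ℤ) ≤ n → n ≤ k → g n ∈ B (J n)) ∧
      (∀ n : ℤ, -(k : ℤ) ≤ n → n + 1 ≤ k → (J n, J (n + 1)) ∈ TminusFin) := by
    intro k
    obtain ⟨j, h1, h2⟩ := key k (2 * k)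
    exact ⟨j, fun n a b => h1 n (by omega) b, fun n a b => h2 n (by omega) b⟩
  choose Jf hJ1 hJ2 using hch
  -- ultrafilter limit
  let U : Ultrafilter ℕ := Ultrafilter.of Filter.atTop
  have hle : (U : Filter ℕ) ≤ Filter.atTop := Ultrafilter.of_le _
  have hlim : ∀ h : ℕ → Fin 5, ∃ v, ∀ᶠ k in (U : Filter ℕ), h k = v :=
    fun h => ultrafilter_fin5_const U h
  set i : ℤ → Fin 5 := fun n => (hlim (fun k => Jf k n)).choose with hidef
  have hi' : ∀ n : ℤ, ∀ᶠ k in (U : Filter ℕ), Jf k n = i n :=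
    fun n => (hlim (fun k => Jf k n)).choose_spec
  have hbig : ∀ n : ℤ, ∀ᶠ k in (U : Filter ℕ),
      (fun m : ℕ => -(m : ℤ) ≤ n ∧ n + 1 ≤ (m : ℤ)) k := by
    intro n
    refine Filter.Eventually.filter_mono hle ?_
    refine Filter.eventually_atTop.2 ⟨n.natAbs + 1, fun b hb => ?_⟩
    omega
  refine ⟨i, ?_, ?_⟩
  · intro n
    obtain ⟨k, hk1, hk2, hk3, hk4⟩ := ((hi' n).and ((hi' (n + 1)).and (hbig n))).exists
    rw [← hk1, ← hk2]
    exact hJ2 k n hk3 hk4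
  · intro n
    obtain ⟨k, hk1, hk3, hk4⟩ := ((hi' n).and (hbig n)).exists
    rw [← hgspec n, ← hk1]
    exact hJ1 k n hk3 (by omega)
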